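/- arXiv:1511.06888 — 4 statements merged into one kernel-verified Lean document; each statement's English description precedes it below -/
import Mathlib

section
/- There exists an optimal solution to the joint cell activation, user association and channel allocation problem that activates at most K + B + 1 patterns; i.e., if the problem min over (α, π) of Σ_b [(1−q_b)ρ_b P_b + q_b |ρ_b|₀ P_b] subject to ρ_b = Σ_{k,i} α_{kbi}, Σ_{i,b} α_{kbi} r_{kbi} ≥ d_k for all k, Σ_k α_{kbi} ≤ π_i for all b,i, Σ_i π_i = 1, and α, π ≥ 0 has an optimal solution, then it has an optimal solution with |{i : π_i > 0}| ≤ K + B + 1. -/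
/-- Feasibility for the joint cell activation / user association / channel
allocation problem. -/
def EnergyFeasible {K B I : Type*} [Fintype K] [Fintype B] [Fintype I]
    (r : K → B → I → ℝ) (d : K → ℝ)
    (α : K → B → I → ℝ) (π : I → ℝ) : Prop :=
  (∀ k b i, 0 ≤ α k b i) ∧ (∀ i, 0 ≤ π i) ∧ (∑ i, π i = 1) ∧
  (∀ b i, ∑ k, α k b i ≤ π i) ∧
  (∀ k, d k ≤ ∑ i, ∑ b, α k b i * r k b i)

/-- Total power consumption objective with the ℓ0 fixed-power term. -/
noncomputable def EnergyObj {K B I : Type*} [Fintype K] [Fintype B] [Fintype I]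
    (P q : B → ℝ) (α : K → B → I → ℝ) : ℝ :=
  ∑ b, ((1 - q b) * (∑ k, ∑ i, α k b i) * P b +
    q b * (if (∑ k, ∑ i, α k b i) = 0 then 0 else 1) * P b)

/-- Proposition 1: if the energy-saving problem has an optimal solution, it
has one activating at most K + B + 1 patterns. -/
theorem stmt_4 {K B I : Type*} [Fintype K] [Fintype B] [Fintype I]
    (r : K → B → I → ℝ) (d : K → ℝ) (P q : B → ℝ)
    (hr : ∀ k b i, 0 ≤ r k b i) (hd : ∀ k, 0 < d k)
    (hP : ∀ b, 0 < P b) (hq : ∀ b, q b ∈ Set.Icc (0:ℝ) 1)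
    (α : K → B → I → ℝ) (π : I → ℝ)
    (hfeas : EnergyFeasible r d α π)
    (hopt : ∀ α' π', EnergyFeasible r d α' π' → EnergyObj P q α ≤ EnergyObj P q α') :
    ∃ (α' : K → B → I → ℝ) (π' : I → ℝ),
      EnergyFeasible r d α' π' ∧
      (∀ α'' π'', EnergyFeasible r d α'' π'' →
        EnergyObj P q α' ≤ EnergyObj P q α'') ∧
      ∃ S : Finset I, S.card ≤ Fintype.card K + Fintype.card B + 1 ∧
        ∀ i ∉ S, π' i = 0 := by
  classical
  obtain ⟨hα0, hπ0, hπ1, hle, hrate⟩ := hfeas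
  -- α vanishes wherever π vanishes
  have hzero : ∀ i, π i = 0 → ∀ k b, α k b i = 0 := by
    intro i hi k b
    have h1 : ∑ k', α k' b i ≤ 0 := (hle b i).trans_eq hi
    have h2 : ∀ k' ∈ Finset.univ, (0:ℝ) ≤ α k' b i := fun k' _ => hα0 k' b i
    have := (Finset.sum_eq_zero_iff_of_nonneg h2).mp
      (le_antisymm h1 (Finset.sum_nonneg h2))
    exact this k (Finset.mem_univ k)
  -- normalized allocation
  set θ : K → B → I → ℝ := fun k b i => if π i = 0 then 0 else α k b i / π i with hθ
  have hθ0 : ∀ k b i, 0 ≤ θ k b i := by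
    intro k b i
    simp only [hθ]
    split
    · exact le_rfl
    · exact div_nonneg (hα0 k b i) (hπ0 i)
  have hθsum : ∀ b i, ∑ k, θ k b i ≤ 1 := by
    intro b i
    by_cases hi : π i = 0
    · simp [hθ, hi]
    · have hpos : 0 < π i := lt_of_le_of_ne (hπ0 i) (Ne.symm hi)
      simp only [hθ, if_neg hi, ← Finset.sum_div]
      exact (div_le_one hpos).mpr (hle b i)
  have hmul : ∀ k b i, π i * θ k b i = α k b i := by
    intro k b i
    by_cases hi : π i = 0
    · simp [hθ, hi, hzero i hi k b]
    · simp only [hθ, if_neg hi]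
      field_simp [hi]
  -- the pattern vectors
  set v : I → (K → ℝ) × (B → ℝ) :=
    fun i => (fun k => ∑ b, θ k b i * r k b i, fun b => ∑ k, θ k b i) with hv
  set p : (K → ℝ) × (B → ℝ) := ∑ i, π i • v i with hp
  have hpmem : p ∈ convexHull ℝ (Set.range v) := by
    rw [hp, ← Finset.centerMass_eq_of_sum_1 _ _ hπ1]
    exact Finset.centerMass_mem_convexHull _ (fun i _ => hπ0 i) (by rw [hπ1]; norm_num)
      (fun i _ => Set.mem_range_self i)
  obtain ⟨ι, hι, z, w, hzs, hai, hw0, hw1, hwz⟩ :=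
    eq_pos_convex_span_of_mem_convexHull hpmem
  -- the cardinality bound
  have hcard : Fintype.card ι ≤ Fintype.card K + Fintype.card B + 1 := by
    have h1 := hai.card_le_finrank_succ
    have h2 : Module.finrank ℝ (vectorSpan ℝ (Set.range z)) ≤
        Fintype.card K + Fintype.card B := by
      have h3 := Submodule.finrank_le (vectorSpan ℝ (Set.range z))
      rwa [Module.finrank_prod, Module.finrank_pi, Module.finrank_pi] at h3
    omega
  -- pick preimages
  have hgex : ∀ j : ι, ∃ i : I, v i = z j := fun j => hzs (Set.mem_range_self j)
  choose g hg using hgex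
  -- the new pattern distribution
  set π' : I → ℝ := fun i => ∑ j, if g j = i then w j else 0 with hπ'
  have hπ'0 : ∀ i, 0 ≤ π' i := by
    intro i
    exact Finset.sum_nonneg fun j _ => by split <;> [exact (hw0 j).le; rfl]
  have hπ'1 : ∑ i, π' i = 1 := by
    rw [hπ', Finset.sum_comm]
    simpa using hw1
  have hπ'v : ∑ i, π' i • v i = p := by
    have h4 : ∑ i, π' i • v i = ∑ j, w j • z j := by
      simp only [hπ', Finset.sum_smul, ite_smul, zero_smul]
      rw [Finset.sum_comm]
      refine Finset.sum_congr rfl fun j _ => ?_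
      rw [Finset.sum_ite_eq, if_pos (Finset.mem_univ _), hg]
    rw [h4, hwz]
  -- first components of sums
  have hfst : ∀ (c : I → ℝ) (k : K),
      (∑ i, c i • v i).1 k = ∑ i, c i * (∑ b, θ k b i * r k b i) := by
    intro c k
    rw [Prod.fst_sum, Finset.sum_apply]
    refine Finset.sum_congr rfl fun i _ => ?_
    show (c i • v i).1 k = _
    rw [Prod.smul_fst, Pi.smul_apply, smul_eq_mul]
  have hsnd : ∀ (c : I → ℝ) (b : B),
      (∑ i, c i • v i).2 b = ∑ i, c i * (∑ k, θ k b i) := by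
    intro c b
    rw [Prod.snd_sum, Finset.sum_apply]
    refine Finset.sum_congr rfl fun i _ => ?_
    show (c i • v i).2 b = _
    rw [Prod.smul_snd, Pi.smul_apply, smul_eq_mul]
  -- components of the vector identity
  have hcomp1 : ∀ k, ∑ i, π' i * (∑ b, θ k b i * r k b i) = ∑ i, ∑ b, α k b i * r k b i := by
    intro k
    have h1 := congrFun (congrArg Prod.fst hπ'v) k
    rw [hfst π' k] at h1
    have h2 : p.1 k = ∑ i, ∑ b, α k b i * r k b i := by
      rw [hp, hfst π k]
      refine Finset.sum_congr rfl fun i _ => ?_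
      rw [Finset.mul_sum]
      refine Finset.sum_congr rfl fun b _ => ?_
      rw [← mul_assoc, hmul]
    exact h1.trans h2
  have hcomp2 : ∀ b, ∑ i, π' i * (∑ k, θ k b i) = ∑ i, ∑ k, α k b i := by
    intro b
    have h1 := congrFun (congrArg Prod.snd hπ'v) b
    rw [hsnd π' b] at h1
    have h2 : p.2 b = ∑ i, ∑ k, α k b i := by
      rw [hp, hsnd π b]
      refine Finset.sum_congr rfl fun i _ => ?_
      rw [Finset.mul_sum]
      exact Finset.sum_congr rfl fun k _ => hmul k b i
    exact h1.trans h2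
  -- the new allocation
  set α' : K → B → I → ℝ := fun k b i => π' i * θ k b i with hα'
  have hρ : ∀ b, ∑ k, ∑ i, α' k b i = ∑ k, ∑ i, α k b i := by
    intro b
    rw [Finset.sum_comm, Finset.sum_comm (f := fun k i => α k b i)]
    calc ∑ i, ∑ k, α' k b i = ∑ i, π' i * (∑ k, θ k b i) := by
          refine Finset.sum_congr rfl fun i _ => ?_
          rw [Finset.mul_sum]
      _ = ∑ i, ∑ k, α k b i := hcomp2 b
  have hfeas' : EnergyFeasible r d α' π' := by
    refine ⟨fun k b i => mul_nonneg (hπ'0 i) (hθ0 k b i), hπ'0, hπ'1, ?_, ?_⟩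
    · intro b i
      calc ∑ k, α' k b i = π' i * ∑ k, θ k b i := by rw [Finset.mul_sum]
        _ ≤ π' i * 1 := mul_le_mul_of_nonneg_left (hθsum b i) (hπ'0 i)
        _ = π' i := mul_one _
    · intro k
      calc d k ≤ ∑ i, ∑ b, α k b i * r k b i := hrate k
        _ = ∑ i, ∑ b, α' k b i * r k b i := by
            rw [← hcomp1 k]
            refine Finset.sum_congr rfl fun i _ => ?_
            rw [Finset.mul_sum]
            exact Finset.sum_congr rfl fun b _ => by ring
  have hobj : EnergyObj P q α' = EnergyObj P q α := by
    unfold EnergyObj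
    refine Finset.sum_congr rfl fun b _ => ?_
    rw [hρ b]
  refine ⟨α', π', hfeas', fun α'' π'' h => hobj ▸ hopt α'' π'' h,
    Finset.image g Finset.univ, ?_, ?_⟩
  · calc (Finset.image g Finset.univ).card ≤ Finset.univ.card :=
        Finset.card_image_le
      _ = Fintype.card ι := Finset.card_univ
      _ ≤ _ := hcard
  · intro i hi
    rw [hπ']
    refine Finset.sum_eq_zero fun j _ => ?_
    rw [if_neg]
    intro hgj
    exact hi (Finset.mem_image.mpr ⟨j, Finset.mem_univ j, hgj⟩)
end

section
/- Closed-form solution of the inner (pricing) problem: Consider minimizing L(α, π) = Σ_{k,b,i} α_{kbi}(w_b − r_{kbi} μ_k) + Σ_k d_k μ_k over the set X = {(α, π) : α_{kbi} ≥ 0, Σ_k α_{kbi} ≤ π_i ∀b,i, Σ_i π_i = 1, π_i ≥ 0}. Define r̃_{kbi} = w_b − r_{kbi} μ_k, k̄(b,i) = argmin_k r̃_{kbi}, and ī = argmin_i Σ_b min(0, r̃_{k̄(b,i),b,i}). Then the point with π_ī = 1 (other π_i = 0) and α_{kbi} = 1 exactly when i = ī, k = k̄(b, ī), and r̃_{kbi}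 < 0 (all other α zero) attains the minimum of L over X, and the minimum value is Σ_b min(0, r̃_{k̄(b,ī),b,ī}) + Σ_k d_k μ_k. -/
/-- The polytope X of the inner (pricing) problem. -/
def InnerX {K B I : Type*} [Fintype K] [Fintype B] [Fintype I]
    (α : K → B → I → ℝ) (π : I → ℝ) : Prop :=
  (∀ k b i, 0 ≤ α k b i) ∧ (∀ b i, ∑ k, α k b i ≤ π i) ∧
  (∀ i, 0 ≤ π i) ∧ (∑ i, π i = 1)

/-- Proposition 2: the inner problem has the indicated closed-form global
minimizer, with optimal value Σ_b min(0, r̃_{k̄(b,ī) b ī}) + Σ_k d_k μ_k. -/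
theorem stmt_5 {K B I : Type*} [Fintype K] [Fintype B] [Fintype I]
    [DecidableEq K] [DecidableEq I]
    (w : B → ℝ) (μ : K → ℝ) (hμ : ∀ k, 0 ≤ μ k)
    (r : K → B → I → ℝ) (d : K → ℝ)
    (kbar : B → I → K)
    (hkbar : ∀ b i k, w b - r (kbar b i) b i * μ (kbar b i) ≤ w b - r k b i * μ k)
    (ibar : I)
    (hibar : ∀ i, ∑ b, min 0 (w b - r (kbar b ibar) b ibar * μ (kbar b ibar)) ≤
      ∑ b, min 0 (w b - r (kbar b i) b i * μ (kbar b i))) :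
    let α : K → B → I → ℝ := fun k b i =>
      if i = ibar ∧ k = kbar b ibar ∧ w b - r k b i * μ k < 0 then 1 else 0
    let π : I → ℝ := fun i => if i = ibar then 1 else 0
    let L : (K → B → I → ℝ) → ℝ := fun a =>
      (∑ k, ∑ b, ∑ i, a k b i * (w b - r k b i * μ k)) + ∑ k, d k * μ k
    InnerX α π ∧
    (∀ α' π', InnerX α' π' → L α ≤ L α') ∧
    L α = (∑ b, min 0 (w b - r (kbar b ibar) b ibar * μ (kbar b ibar))) +
      ∑ k, d k * μ k := by
  intro α π L
  -- abbreviation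
  set rt : K → B → I → ℝ := fun k b i => w b - r k b i * μ k with hrt
  have hval : L α = (∑ b, min 0 (rt (kbar b ibar) b ibar)) + ∑ k, d k * μ k := by
    have h1 : (∑ k, ∑ b, ∑ i, α k b i * rt k b i)
        = ∑ b, ∑ k, ∑ i, α k b i * rt k b i := Finset.sum_comm
    have h2 : ∀ b, (∑ k, ∑ i, α k b i * rt k b i) = min 0 (rt (kbar b ibar) b ibar) := by
      intro b
      have h3 : ∀ k, (∑ i, α k b i * rt k b i)
          = if k = kbar b ibar ∧ rt k b ibar < 0 then rt k b ibar else 0 := by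
        intro k
        rw [Finset.sum_eq_single ibar]
        · simp only [α, rt]
          by_cases h : k = kbar b ibar ∧ w b - r k b ibar * μ k < 0 <;> simp [h]
        · intro i _ hi
          simp [α, hi]
        · simp
      rw [Finset.sum_congr rfl (fun k _ => h3 k)]
      rw [Finset.sum_eq_single (kbar b ibar)]
      · by_cases h : rt (kbar b ibar) b ibar < 0
        · simp [h, min_eq_right (le_of_lt h)]
        · simp [h, min_eq_left (le_of_not_gt h)]
      · intro k _ hk
        simp [hk]
      · simp
    simp only [L]
    rw [h1, Finset.sum_congr rfl (fun b _ => h2 b)]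
  have hXmem : InnerX α π := by
    refine ⟨?_, ?_, ?_, ?_⟩
    · intro k b i; simp only [α]; positivity
    · intro b i
      by_cases hi : i = ibar
      · subst hi
        have : ∀ k, α k b i ≤ if k = kbar b i then 1 else 0 := by
          intro k
          by_cases hk : k = kbar b i <;> simp [α, hk] <;> split <;> norm_num
        calc ∑ k, α k b i ≤ ∑ k, if k = kbar b i then (1:ℝ) else 0 :=
              Finset.sum_le_sum (fun k _ => this k)
          _ ≤ 1 := by rw [Finset.sum_ite_eq']; split <;> simp [π]
          _ = π i := by simp [π]
      · have : ∀ k, α k b i = 0 := by intro k; simp [α, hi]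
        simp [this, π, hi]
    · intro i; simp only [π]; split <;> norm_num
    · simp [π, Finset.sum_ite_eq']
  refine ⟨hXmem, ?_, hval⟩
  intro α' π' hX
  obtain ⟨h1, h2, h3, h4⟩ := hX
  set m : B → I → ℝ := fun b i => min 0 (rt (kbar b i) b i) with hm
  have hm0 : ∀ b i, m b i ≤ 0 := fun b i => min_le_left _ _
  have step1 : ∀ b i, π' i * m b i ≤ ∑ k, α' k b i * rt k b i := by
    intro b i
    calc π' i * m b i ≤ (∑ k, α' k b i) * m b i :=
          mul_le_mul_of_nonpos_right (h2 b i) (hm0 b i)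
      _ = ∑ k, α' k b i * m b i := by rw [Finset.sum_mul]
      _ ≤ ∑ k, α' k b i * rt k b i := by
          refine Finset.sum_le_sum fun k _ => ?_
          exact mul_le_mul_of_nonneg_left
            ((min_le_right _ _).trans (hkbar b i k)) (h1 k b i)
  set M : ℝ := ∑ b, m b ibar with hM
  have step2 : M ≤ ∑ k, ∑ b, ∑ i, α' k b i * rt k b i := by
    have hswap : (∑ k, ∑ b, ∑ i, α' k b i * rt k b i)
        = ∑ i, ∑ b, ∑ k, α' k b i * rt k b i := by
      rw [Finset.sum_congr rfl fun k (_ : k ∈ Finset.univ) =>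
        (Finset.sum_comm : (∑ b, ∑ i, α' k b i * rt k b i) = _), Finset.sum_comm]
      exact Finset.sum_congr rfl fun i _ => Finset.sum_comm
    rw [hswap]
    calc M = ∑ i, π' i * M := by rw [← Finset.sum_mul, h4, one_mul]
      _ ≤ ∑ i, π' i * ∑ b, m b i := by
          refine Finset.sum_le_sum fun i _ => ?_
          exact mul_le_mul_of_nonneg_left (hibar i) (h3 i)
      _ = ∑ i, ∑ b, π' i * m b i := by
          exact Finset.sum_congr rfl fun i _ => Finset.mul_sum _ _ _
      _ ≤ ∑ i, ∑ b, ∑ k, α' k b i * rt k b i := by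
          refine Finset.sum_le_sum fun i _ => Finset.sum_le_sum fun b _ => step1 b i
  rw [hval]
  have : L α' = (∑ k, ∑ b, ∑ i, α' k b i * rt k b i) + ∑ k, d k * μ k := rfl
  rw [this]
  exact add_le_add_left step2 _
end

section
/- For the linear program min Σ_{k,b,i} α_{kbi}(w_b − r_{kbi} μ_k) over X = {(α,π) : α ≥ 0, Σ_k α_{kbi} ≤ π_i ∀b,i, π in the simplex}, the optimal value equals min over i ∈ I of Σ_b min(0, min_k (w_b − r_{kbi} μ_k)): i.e., the optimization over the polytope reduces to choosing a single best pattern and, within it, a single best user per base station (or none if all reduced costs are nonnegative). -/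
/-- The optimal value of the inner LP over X equals
min_{i} Σ_b min(0, min_k (w_b − r_{kbi} μ_k)). -/
theorem stmt_6 {K B I : Type*} [Fintype K] [Fintype B] [Fintype I]
    [Nonempty K] [Nonempty I]
    (w : B → ℝ) (μ : K → ℝ) (hμ : ∀ k, 0 ≤ μ k) (r : K → B → I → ℝ) :
    IsLeast {v : ℝ | ∃ (α : K → B → I → ℝ) (π : I → ℝ), InnerX α π ∧
        v = ∑ k, ∑ b, ∑ i, α k b i * (w b - r k b i * μ k)}
      (Finset.univ.inf' Finset.univ_nonempty (fun i : I =>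
        ∑ b, min 0 (Finset.univ.inf' Finset.univ_nonempty
          (fun k : K => w b - r k b i * μ k)))) := by
  classical
  set c : K → B → I → ℝ := fun k b i => w b - r k b i * μ k with hc
  set m : B → I → ℝ := fun b i =>
    min 0 (Finset.univ.inf' Finset.univ_nonempty (fun k : K => c k b i)) with hm
  set F : ℝ := Finset.univ.inf' Finset.univ_nonempty (fun i : I => ∑ b, m b i) with hFdef
  have hm_nonpos : ∀ b i, m b i ≤ 0 := fun b i => min_le_left _ _
  have hm_le : ∀ k b i, m b i ≤ c k b i := fun k b i =>
    (min_le_right _ _).trans (Finset.inf'_le _ (Finset.mem_univ k))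
  constructor
  · -- membership
    obtain ⟨i₀, -, hi₀⟩ := Finset.exists_mem_eq_inf'
      Finset.univ_nonempty (fun i : I => ∑ b, m b i)
    choose k₀ hk₀mem hk₀ using fun b : B =>
      Finset.exists_mem_eq_inf' Finset.univ_nonempty (fun k : K => c k b i₀)
    set A : K → B → I → ℝ := fun k b i =>
      if i = i₀ then
        (if Finset.univ.inf' Finset.univ_nonempty (fun k : K => c k b i₀) < 0 then
          (if k = k₀ b then 1 else 0) else 0)
      else 0 with hA
    refine ⟨A, fun i => if i = i₀ then 1 else 0, ⟨?_, ?_, ?_, ?_⟩, ?_⟩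
    · intro k b i; simp only [hA]; positivity
    · intro b i
      rcases eq_or_ne i i₀ with hi | hi
      · have h1 : (∑ k, A k b i) ≤ ∑ k, (if k = k₀ b then (1:ℝ) else 0) :=
          Finset.sum_le_sum fun k _ => by
            simp only [hA]; split_ifs <;> norm_num
        calc (∑ k, A k b i) ≤ ∑ k, (if k = k₀ b then (1:ℝ) else 0) := h1
          _ = 1 := by simp
          _ = if i = i₀ then 1 else 0 := by rw [if_pos hi]
      · simp [hA, hi]
    · intro i; positivity
    · simp
    · have hb : ∀ b : B, (∑ k, ∑ i, A k b i * c k b i) = m b i₀ := by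
        intro b
        by_cases hP : Finset.univ.inf' Finset.univ_nonempty (fun k : K => c k b i₀) < 0
        · have : (∑ k, ∑ i, A k b i * c k b i) = c (k₀ b) b i₀ := by
            simp only [hA, if_pos hP, ite_mul, one_mul, zero_mul,
              Finset.sum_ite_eq', Finset.mem_univ, if_true]
          rw [this]
          simp only [hm]
          rw [min_eq_right hP.le]
          exact (hk₀ b).symm
        · have : (∑ k, ∑ i, A k b i * c k b i) = 0 := by
            simp only [hA, if_neg hP, ite_self, zero_mul, Finset.sum_const_zero]
          rw [this]
          simp only [hm]
          exact (min_eq_left (not_lt.1 hP)).symm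
      calc F = ∑ b, m b i₀ := hi₀
        _ = ∑ b, ∑ k, ∑ i, A k b i * c k b i := by simp [hb]
        _ = ∑ k, ∑ b, ∑ i, A k b i * c k b i := Finset.sum_comm
  · -- lower bound
    rintro v ⟨α, π, ⟨hα, hsum, hπ, hπ1⟩, rfl⟩
    have step1 : ∀ b i, π i * m b i ≤ ∑ k, α k b i * c k b i := by
      intro b i
      calc π i * m b i ≤ (∑ k, α k b i) * m b i :=
            mul_le_mul_of_nonpos_right (hsum b i) (hm_nonpos b i)
        _ = ∑ k, α k b i * m b i := by rw [Finset.sum_mul]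
        _ ≤ ∑ k, α k b i * c k b i :=
            Finset.sum_le_sum fun k _ =>
              mul_le_mul_of_nonneg_left (hm_le k b i) (hα k b i)
    calc F = (∑ i, π i) * F := by rw [hπ1, one_mul]
      _ = ∑ i, π i * F := Finset.sum_mul _ _ _
      _ ≤ ∑ i, π i * (∑ b, m b i) :=
          Finset.sum_le_sum fun i _ =>
            mul_le_mul_of_nonneg_left (Finset.inf'_le _ (Finset.mem_univ i)) (hπ i)
      _ = ∑ i, ∑ b, π i * m b i := by simp [Finset.mul_sum]
      _ ≤ ∑ i, ∑ b, ∑ k, α k b i * c k b i :=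
          Finset.sum_le_sum fun i _ => Finset.sum_le_sum fun b _ => step1 b i
      _ = ∑ b, ∑ i, ∑ k, α k b i * c k b i := Finset.sum_comm
      _ = ∑ b, ∑ k, ∑ i, α k b i * c k b i :=
          Finset.sum_congr rfl fun b _ => Finset.sum_comm
      _ = ∑ k, ∑ b, ∑ i, α k b i * c k b i := Finset.sum_comm
end

section
/- Using the closed form of Proposition 2, the dual function admits the explicit expression h(μ) = min_{i∈I} Σ_{b∈B} min(0, min_{k∈K}(w_b − r_{kbi} μ_k)) + Σ_k d_k μ_k for all μ ≥ 0. -/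
/-- Explicit expression for the dual function:
h(μ) = min_i Σ_b min(0, min_k (w_b − r_{kbi} μ_k)) + Σ_k d_k μ_k. -/
theorem stmt_13 {K B I : Type*} [Fintype K] [Fintype B] [Fintype I]
    [Nonempty K] [Nonempty I]
    (w : B → ℝ) (r : K → B → I → ℝ) (d : K → ℝ)
    (μ : K → ℝ) (hμ : ∀ k, 0 ≤ μ k) :
    sInf {v : ℝ | ∃ (α : K → B → I → ℝ) (π : I → ℝ), InnerX α π ∧
        v = (∑ k, ∑ b, ∑ i, α k b i * (w b - r k b i * μ k)) +
          ∑ k, d k * μ k} =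
      (Finset.univ.inf' Finset.univ_nonempty (fun i : I =>
        ∑ b, min 0 (Finset.univ.inf' Finset.univ_nonempty
          (fun k : K => w b - r k b i * μ k)))) + ∑ k, d k * μ k := by
  classical
  set c : K → B → I → ℝ := fun k b i => w b - r k b i * μ k with hc
  set M : I → ℝ := fun i => ∑ b, min 0 (Finset.univ.inf' Finset.univ_nonempty
      (fun k : K => c k b i)) with hM
  set T : ℝ := Finset.univ.inf' Finset.univ_nonempty M with hT
  -- lower bound on every element of the set
  have hlb : ∀ v ∈ {v : ℝ | ∃ (α : K → B → I → ℝ) (π : I → ℝ), InnerX α π ∧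
        v = (∑ k, ∑ b, ∑ i, α k b i * (w b - r k b i * μ k)) +
          ∑ k, d k * μ k}, T + ∑ k, d k * μ k ≤ v := by
    rintro v ⟨α, π, ⟨hα, hsum, hπ, hπ1⟩, rfl⟩
    have h1 : (∑ k, ∑ b, ∑ i, α k b i * c k b i)
        = ∑ i, ∑ b, ∑ k, α k b i * c k b i := by
      calc (∑ k, ∑ b, ∑ i, α k b i * c k b i)
          = ∑ b, ∑ k, ∑ i, α k b i * c k b i := Finset.sum_comm
        _ = ∑ b, ∑ i, ∑ k, α k b i * c k b i :=
            Finset.sum_congr rfl fun b _ => Finset.sum_comm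
        _ = ∑ i, ∑ b, ∑ k, α k b i * c k b i := Finset.sum_comm
    have step : ∀ i, π i * T ≤ ∑ b, ∑ k, α k b i * c k b i := by
      intro i
      have h2 : ∀ b, π i * min 0 (Finset.univ.inf' Finset.univ_nonempty
          (fun k : K => c k b i)) ≤ ∑ k, α k b i * c k b i := by
        intro b
        set m := min 0 (Finset.univ.inf' Finset.univ_nonempty (fun k : K => c k b i)) with hm
        have hm0 : m ≤ 0 := min_le_left _ _
        have hmc : ∀ k, m ≤ c k b i := fun k =>
          le_trans (min_le_right _ _) (Finset.inf'_le _ (Finset.mem_univ k))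
        calc π i * m ≤ (∑ k, α k b i) * m :=
              mul_le_mul_of_nonpos_right (hsum b i) hm0
          _ = ∑ k, α k b i * m := by rw [Finset.sum_mul]
          _ ≤ ∑ k, α k b i * c k b i :=
              Finset.sum_le_sum fun k _ => mul_le_mul_of_nonneg_left (hmc k) (hα k b i)
      calc π i * T ≤ π i * M i :=
            mul_le_mul_of_nonneg_left (Finset.inf'_le _ (Finset.mem_univ i)) (hπ i)
        _ = ∑ b, π i * min 0 (Finset.univ.inf' Finset.univ_nonempty
              (fun k : K => c k b i)) := by rw [hM, Finset.mul_sum]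
        _ ≤ ∑ b, ∑ k, α k b i * c k b i := Finset.sum_le_sum fun b _ => h2 b
    have key : T ≤ ∑ k, ∑ b, ∑ i, α k b i * c k b i := by
      rw [h1]
      calc T = (∑ i, π i) * T := by rw [hπ1, one_mul]
        _ = ∑ i, π i * T := by rw [Finset.sum_mul]
        _ ≤ ∑ i, ∑ b, ∑ k, α k b i * c k b i := Finset.sum_le_sum fun i _ => step i
    exact add_le_add_left key _
  -- witness achieving the bound
  obtain ⟨i0, -, hi0⟩ := Finset.exists_mem_eq_inf' (Finset.univ_nonempty (α := I)) M
  have hkb : ∀ b : B, ∃ k : K,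
      (Finset.univ.inf' Finset.univ_nonempty fun k => c k b i0) = c k b i0 := by
    intro b
    obtain ⟨k, -, hk⟩ := Finset.exists_mem_eq_inf' (Finset.univ_nonempty (α := K))
      (fun k => c k b i0)
    exact ⟨k, hk⟩
  choose kb hkb using hkb
  set α : K → B → I → ℝ := fun k b i =>
    if i = i0 ∧ k = kb b ∧ c (kb b) b i0 < 0 then 1 else 0 with hαdef
  set π : I → ℝ := fun i => if i = i0 then 1 else 0 with hπdef
  have hmem : T + ∑ k, d k * μ k ∈ {v : ℝ | ∃ (α : K → B → I → ℝ) (π : I → ℝ),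
      InnerX α π ∧ v = (∑ k, ∑ b, ∑ i, α k b i * (w b - r k b i * μ k)) +
        ∑ k, d k * μ k} := by
    refine ⟨α, π, ⟨?_, ?_, ?_, ?_⟩, ?_⟩
    · intro k b i; simp only [hαdef]; positivity
    · intro b i
      by_cases hi : i = i0
      · subst hi
        by_cases hP : c (kb b) b i < 0
        · simp [hαdef, hπdef, hP, Finset.sum_ite_eq']
        · simp [hαdef, hπdef, hP]
      · simp [hαdef, hπdef, hi]
    · intro i; simp only [hπdef]; positivity
    · simp [hπdef, Finset.sum_ite_eq']
    · have hval : ∀ b, (∑ k, ∑ i, α k b i * c k b i) = min 0 (c (kb b) b i0) := by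
        intro b
        by_cases hP : c (kb b) b i0 < 0
        · have : ∀ k i, α k b i * c k b i = if i = i0 ∧ k = kb b then c k b i else 0 := by
            intro k i
            by_cases h : i = i0 ∧ k = kb b <;> simp [hαdef, h, hP]
          simp only [this]
          rw [min_eq_right hP.le]
          simp [ite_and, Finset.sum_ite_eq', Finset.sum_ite_eq]
        · have : ∀ k i, α k b i * c k b i = 0 := by
            intro k i; simp [hαdef, hP]
          simp [this, min_eq_left (not_lt.mp hP)]
      have hT0 : T = M i0 := hi0
      have : (∑ k, ∑ b, ∑ i, α k b i * c k b i) = T := by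
        calc (∑ k, ∑ b, ∑ i, α k b i * c k b i)
            = ∑ b, ∑ k, ∑ i, α k b i * c k b i := Finset.sum_comm
          _ = ∑ b, min 0 (c (kb b) b i0) := Finset.sum_congr rfl fun b _ => hval b
          _ = M i0 := by
              rw [hM]
              exact Finset.sum_congr rfl fun b _ => by rw [hkb b]
          _ = T := hT0.symm
      rw [← this]
  exact le_antisymm (csInf_le ⟨T + ∑ k, d k * μ k, hlb⟩ hmem)
    (le_csInf ⟨_, hmem⟩ hlb)
end
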